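/- Key identity of the skew-symmetric case (proof of equation (5.6)). Assume σ22 ≠ 0 and the skew-symmetric condition 2σ12·r11·r22 = σ11·r21·r22 + σ22·r12·r11. Let θ1 ∈ ℝ and θ2 ∈ ℂ with Im θ2 ≠ 0 and γ(θ1, θ2) = 0. Then γ1(θ1, θ2)·γ2(θ1, conj θ2) = θ1·( 2r22(r21·μ1 − r11·μ2)/σ22 − θ2·detR ). -/

import Mathlib

open Complex

/-- Key identity of the skew-symmetric case (proof of equation (5.6)). -/
theorem stmt9 (σ11 σ22 σ12 μ1 μ2 r11 r12 r21 r22 : ℝ)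
    (hσ22 : σ22 ≠ 0)
    (hskew : 2 * σ12 * r11 * r22 = σ11 * r21 * r22 + σ22 * r12 * r11)
    (θ1 : ℝ) (θ2 : ℂ) (hθ2 : θ2.im ≠ 0)
    (hker : (1 / 2 : ℂ) * ((σ11 : ℂ) * (θ1 : ℂ) ^ 2 + 2 * (σ12 : ℂ) * (θ1 : ℂ) * θ2
        + (σ22 : ℂ) * θ2 ^ 2)
      + (μ1 : ℂ) * (θ1 : ℂ) + (μ2 : ℂ) * θ2 = 0) :
    ((r11 : ℂ) * (θ1 : ℂ) + (r21 : ℂ) * θ2)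
        * ((r12 : ℂ) * (θ1 : ℂ) + (r22 : ℂ) * starRingEnd ℂ θ2)
      = (θ1 : ℂ) * (((2 * r22 * (r21 * μ1 - r11 * μ2) / σ22 : ℝ) : ℂ)
        - θ2 * ((r11 * r22 - r12 * r21 : ℝ) : ℂ)) := by
  set c : ℂ := starRingEnd ℂ θ2 with hc
  have hσ22' : (σ22 : ℂ) ≠ 0 := by exact_mod_cast hσ22
  have hconj : (1 / 2 : ℂ) * ((σ11 : ℂ) * (θ1 : ℂ) ^ 2 + 2 * (σ12 : ℂ) * (θ1 : ℂ) * c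
      + (σ22 : ℂ) * c ^ 2) + (μ1 : ℂ) * (θ1 : ℂ) + (μ2 : ℂ) * c = 0 := by
    have := congrArg (starRingEnd ℂ) hker
    simpa [map_add, map_mul, map_pow, map_ofNat, Complex.conj_ofReal, map_div₀, map_one] using this
  have hne : θ2 - c ≠ 0 := by
    rw [sub_ne_zero]
    intro h
    exact hθ2 (Complex.conj_eq_iff_im.mp h.symm)
  have hfac : (θ2 - c) * ((σ22 : ℂ) * (θ2 + c) / 2 + (σ12 : ℂ) * θ1 + μ2) = 0 := by
    linear_combination hker - hconj
  have hs0 : (σ22 : ℂ) * (θ2 + c) / 2 + (σ12 : ℂ) * θ1 + μ2 = 0 :=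
    (mul_eq_zero.mp hfac).resolve_left hne
  have hp : (σ22 : ℂ) * θ2 * c = (σ11 : ℂ) * θ1 ^ 2 + 2 * μ1 * θ1 := by
    linear_combination 2 * θ2 * hs0 - 2 * hker
  have hskewC : 2 * (σ12 : ℂ) * r11 * r22 = (σ11 : ℂ) * r21 * r22 + (σ22 : ℂ) * r12 * r11 := by
    exact_mod_cast congrArg (fun x : ℝ => (x : ℂ)) hskew
  push_cast
  field_simp
  linear_combination (-(θ1 : ℂ) ^ 2) * hskewC + (2 * r11 * r22 * θ1) * hs0 + (r21 * r22) * hp
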